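/- Let ε > 0. Suppose: (1) the sets X_t ⊆ ℝ^n are nonempty, convex, and compact for t−1 and t; (2) each component g_{t,i}(·,·,ξ) is convex on X_t × X_{t−1}^ε, where X_{t−1}^ε is the ε-fattening of X_{t−1}; (3) for every x_{t−1} ∈ X_{t−1}^ε the set {x_t ∈ ri(X_t) : A x_t + B x_{t−1} = b, g_t(x_t, x_{t−1}, ξ) ≤ 0} is nonempty; and (4) there exists (x̄_t, x̄_{t−1}) ∈ ri(X_t) × X_{t−1} with A x̄_t + B x̄_{t−1} = b and g_t(x̄_t, x̄_{t−1}, ξ) < 0. Then for every x_{t−1} ∈ X_{t−1} there exists x̃ ∈ ri(X_t) with A x̃ + B x_{t−1} = b and g_t(x̃, x_{t−1}, ξ) < 0. -/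

import Mathlib

open Matrix
open scoped Pointwise

section aux

variable {E : Type*} [NormedAddCommGroup E] [NormedSpace ℝ E]

lemma intrinsicInterior_combo {s : Set E} (hs : Convex ℝ s) {a b : E}
    (ha : a ∈ intrinsicInterior ℝ s) (hb : b ∈ intrinsicInterior ℝ s) {θ : ℝ}
    (h0 : 0 ≤ θ) (h1 : θ ≤ 1) : (1 - θ) • a + θ • b ∈ intrinsicInterior ℝ s := by
  obtain ⟨a', haI, rfl⟩ := ha
  obtain ⟨b', hbI, rfl⟩ := hb
  have hc : (1 - θ) • (a' : E) + θ • (b' : E) ∈ affineSpan ℝ s := by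
    have := AffineSubspace.smul_vsub_vadd_mem (affineSpan ℝ s) θ b'.2 a'.2 a'.2
    convert this using 1
    simp only [vsub_eq_sub, vadd_eq_add]
    module
  obtain ⟨ra, hra, hball_a⟩ := Metric.mem_nhds_iff.1 (mem_interior_iff_mem_nhds.1 haI)
  obtain ⟨rb, hrb, hball_b⟩ := Metric.mem_nhds_iff.1 (mem_interior_iff_mem_nhds.1 hbI)
  refine ⟨⟨(1 - θ) • (a' : E) + θ • (b' : E), hc⟩, ?_, rfl⟩
  rw [mem_interior_iff_mem_nhds, Metric.mem_nhds_iff]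
  refine ⟨min ra rb, lt_min hra hrb, ?_⟩
  rintro ⟨z, hz⟩ hzball
  simp only [Metric.mem_ball, Subtype.dist_eq, dist_eq_norm] at hzball
  set c : E := (1 - θ) • (a' : E) + θ • (b' : E) with hcdef
  set d : E := z - c with hddef
  have hd : ‖d‖ < min ra rb := hzball
  have hdmem : d ∈ (affineSpan ℝ s).direction := by
    have := AffineSubspace.vsub_mem_direction hz hc
    simpa using this
  have hamem : (a' : E) + d ∈ affineSpan ℝ s := by
    have := AffineSubspace.vadd_mem_of_mem_direction hdmem a'.2
    simpa [add_comm] using this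
  have hbmem : (b' : E) + d ∈ affineSpan ℝ s := by
    have := AffineSubspace.vadd_mem_of_mem_direction hdmem b'.2
    simpa [add_comm] using this
  have has : (a' : E) + d ∈ s := by
    have : (⟨(a' : E) + d, hamem⟩ : affineSpan ℝ s) ∈ Metric.ball a' ra := by
      simp only [Metric.mem_ball, Subtype.dist_eq, dist_eq_norm, add_sub_cancel_left]
      exact hd.trans_le (min_le_left _ _)
    exact hball_a this
  have hbs : (b' : E) + d ∈ s := by
    have : (⟨(b' : E) + d, hbmem⟩ : affineSpan ℝ s) ∈ Metric.ball b' rb := by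
      simp only [Metric.mem_ball, Subtype.dist_eq, dist_eq_norm, add_sub_cancel_left]
      exact hd.trans_le (min_le_right _ _)
    exact hball_b this
  have : z ∈ s := by
    have hcomb := hs has hbs (by linarith : (0:ℝ) ≤ 1 - θ) h0 (by ring)
    have hz' : z = (1 - θ) • ((a' : E) + d) + θ • ((b' : E) + d) := by
      have : z = c + d := by simp [hddef]
      rw [this, hcdef]; module
    rwa [hz']
  exact this

end aux


lemma mulVec_smul_add' {q n : ℕ} (M : Matrix (Fin q) (Fin n) ℝ) (c : ℝ)
    (u v : EuclideanSpace ℝ (Fin n)) :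
    M *ᵥ (c • u + v) = c • (M *ᵥ u) + M *ᵥ v := by
  show M *ᵥ (c • (u : Fin n → ℝ) + (v : Fin n → ℝ)) = _
  rw [Matrix.mulVec_add, Matrix.mulVec_smul]

/-- Slater-type constraint qualification for the backward-pass subproblems
(Lemma 5.1): under convexity of the constraints on the ε-fattened set and
the recourse/Slater assumptions, every x_{t−1} ∈ X_{t−1} admits a strictly
feasible point x̃ ∈ ri(X_t). -/
theorem stmt_6 {n q p : ℕ} (ε : ℝ) (hε : 0 < ε)
    (Xt Xtm1 : Set (EuclideanSpace ℝ (Fin n)))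
    (hXt : Xt.Nonempty) (hXtconv : Convex ℝ Xt) (hXtcomp : IsCompact Xt)
    (hXtm1 : Xtm1.Nonempty) (hXtm1conv : Convex ℝ Xtm1) (hXtm1comp : IsCompact Xtm1)
    (A B : Matrix (Fin q) (Fin n) ℝ) (b : Fin q → ℝ)
    (g : EuclideanSpace ℝ (Fin n) → EuclideanSpace ℝ (Fin n) → Fin p → ℝ)
    -- each component of g is convex on X_t × X_{t−1}^ε:
    (hgconv : ∀ i, ConvexOn ℝ (Xt ×ˢ (Xtm1 + Metric.closedBall 0 ε))
      (fun z => g z.1 z.2 i))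
    -- for every x in the ε-fattening of X_{t−1} the subproblem has a feasible
    -- point in the relative interior of X_t:
    (hrec : ∀ x : EuclideanSpace ℝ (Fin n), x ∈ Xtm1 + Metric.closedBall 0 ε →
      ∃ y ∈ intrinsicInterior ℝ Xt, A *ᵥ y + B *ᵥ x = b ∧ ∀ i, g y x i ≤ 0)
    -- existence of a strictly feasible pair:
    (hslater : ∃ ybar ∈ intrinsicInterior ℝ Xt, ∃ xbar ∈ Xtm1,
      A *ᵥ ybar + B *ᵥ xbar = b ∧ ∀ i, g ybar xbar i < 0) :
    ∀ x ∈ Xtm1, ∃ y ∈ intrinsicInterior ℝ Xt,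
      A *ᵥ y + B *ᵥ x = b ∧ ∀ i, g y x i < 0 := by
  obtain ⟨ybar, hybar, xbar, hxbar, heqbar, hgbar⟩ := hslater
  intro x hx
  by_cases hxx : x = xbar
  · exact ⟨ybar, hybar, by rw [hxx]; exact heqbar, by rw [hxx]; exact hgbar⟩
  -- set up the construction
  set d : ℝ := ‖x - xbar‖ with hddef
  have hd : 0 < d := by
    rw [hddef, norm_pos_iff]
    exact sub_ne_zero.2 hxx
  set θ : ℝ := d / (d + ε) with hθdef
  have hθ0 : 0 < θ := div_pos hd (by linarith)
  have hθ1 : θ < 1 := by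
    rw [hθdef, div_lt_one (by linarith)]; linarith
  set xε : EuclideanSpace ℝ (Fin n) := x + (ε / d) • (x - xbar) with hxεdef
  have hxεmem : xε ∈ Xtm1 + Metric.closedBall 0 ε := by
    refine Set.add_mem_add hx ?_
    rw [Metric.mem_closedBall, dist_zero_right, norm_smul, Real.norm_eq_abs,
      abs_of_pos (div_pos hε hd), ← hddef, div_mul_cancel₀ _ hd.ne']
  obtain ⟨yε, hyε, heqε, hgε⟩ := hrec xε hxεmem
  -- the combination
  refine ⟨(1 - θ) • ybar + θ • yε, intrinsicInterior_combo hXtconv hybar hyε hθ0.le hθ1.le,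
    ?_, ?_⟩
  · -- linear constraint
    have hne : d + ε ≠ 0 := by positivity
    have hxcomb : (1 - θ) • xbar + θ • xε = x := by
      rw [hxεdef, hθdef]
      match_scalars <;> (field_simp; try ring)
    have hA : A *ᵥ ((1 - θ) • ybar + θ • yε) = (1 - θ) • (A *ᵥ ybar) + θ • (A *ᵥ yε) := by
      rw [mulVec_smul_add']
      congr 1
      have := mulVec_smul_add' A θ yε 0
      simpa using this
    have hB : B *ᵥ ((1 - θ) • xbar + θ • xε) = (1 - θ) • (B *ᵥ xbar) + θ • (B *ᵥ xε) := by
      rw [mulVec_smul_add']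
      congr 1
      have := mulVec_smul_add' B θ xε 0
      simpa using this
    calc A *ᵥ ((1 - θ) • ybar + θ • yε) + B *ᵥ x
        = A *ᵥ ((1 - θ) • ybar + θ • yε) + B *ᵥ ((1 - θ) • xbar + θ • xε) := by
          rw [← hxcomb]; rfl
      _ = (1 - θ) • (A *ᵥ ybar + B *ᵥ xbar) + θ • (A *ᵥ yε + B *ᵥ xε) := by
          rw [hA, hB]
          simp only [smul_add]
          abel
      _ = b := by rw [heqbar, heqε]; simp [← add_smul]
  · -- strict inequality
    intro i
    have hmem1 : ((ybar, xbar) : EuclideanSpace ℝ (Fin n) × EuclideanSpace ℝ (Fin n)) ∈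
        Xt ×ˢ (Xtm1 + Metric.closedBall 0 ε) := by
      refine ⟨intrinsicInterior_subset hybar, ?_⟩
      have : xbar = xbar + 0 := by simp
      rw [this]
      exact Set.add_mem_add hxbar (Metric.mem_closedBall_self hε.le)
    have hmem2 : ((yε, xε) : EuclideanSpace ℝ (Fin n) × EuclideanSpace ℝ (Fin n)) ∈
        Xt ×ˢ (Xtm1 + Metric.closedBall 0 ε) :=
      ⟨intrinsicInterior_subset hyε, hxεmem⟩
    have hkey := (hgconv i).2 hmem1 hmem2 (by linarith : (0:ℝ) ≤ 1 - θ) hθ0.le (by ring)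
    have hne : d + ε ≠ 0 := by positivity
    have hxcomb : (1 - θ) • xbar + θ • xε = x := by
      rw [hxεdef, hθdef]
      match_scalars <;> (field_simp; try ring)
    have hpt : ((1 - θ) • ((ybar, xbar) : EuclideanSpace ℝ (Fin n) × EuclideanSpace ℝ (Fin n))
        + θ • (yε, xε)) = ((1 - θ) • ybar + θ • yε, x) := Prod.ext rfl hxcomb
    rw [hpt] at hkey
    simp only [smul_eq_mul] at hkey
    have h1 : (1 - θ) * g ybar xbar i < 0 :=
      mul_neg_of_pos_of_neg (by linarith) (hgbar i)
    have h2 : θ * g yε xε i ≤ 0 :=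
      mul_nonpos_of_nonneg_of_nonpos hθ0.le (hgε i)
    calc g ((1 - θ) • ybar + θ • yε) x i ≤ (1 - θ) * g ybar xbar i + θ * g yε xε i := hkey
      _ < 0 := by linarith
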